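/- Let Γ act freely by homeomorphisms on a compact metric space X, let U ⊆ X be closed with F-components S-bounded, and for x ∈ U let S^x ⊆ Γ be the unique set with S^x·x equal to the F-component of x in U. Then each x ∈ U has an open neighborhood U^x in X such that whenever s ∈ S^x, f ∈ F, and fs ∉ S^x, the distance d(fs·U^x, U) is strictly positive. -/
import Mathlib


/-- The `F`-component of `x` in `A ⊆ X` for a group action. -/
def AComp {Γ X : Type*} [SMul Γ X] (F : Set Γ) (A : Set X) (x : X) : Set X :=
  {y | Relation.ReflTransGen (fun a b => a ∈ A ∧ b ∈ A ∧ ∃ f ∈ F, b = f • a) x y}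

/-- A set `Y ⊆ X` is `S`-bounded if `Y ⊆ S • z` for a single point `z`. -/
def SBdd {Γ X : Type*} [SMul Γ X] (S : Set Γ) (Y : Set X) : Prop :=
  ∃ z : X, Y ⊆ (fun s : Γ => s • z) '' S

/-- Each `x ∈ U` has an open neighborhood `W` such that if `s ∈ Sˣ`, `f ∈ F` but
`f * s ∉ Sˣ`, then `d((f*s) • W, U) > 0`. -/
theorem stmt4 {Γ X : Type*} [Group Γ] [Countable Γ] [MetricSpace X] [CompactSpace X]
    [MulAction Γ X] (hcont : ∀ γ : Γ, Continuous (fun x : X => γ • x))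
    (hfree : ∀ (γ : Γ) (x : X), γ • x = x → γ = 1)
    (F S : Finset Γ) (hFe : (1 : Γ) ∈ F) (hFsym : ∀ f ∈ F, f⁻¹ ∈ F)
    (hSe : (1 : Γ) ∈ S) (hSsym : ∀ s ∈ S, s⁻¹ ∈ S)
    (U : Set X) (hU : IsClosed U)
    (hbdd : ∀ x ∈ U, SBdd (S : Set Γ) (AComp (F : Set Γ) U x))
    (Sx : X → Set Γ)
    (hSx : ∀ x ∈ U, (fun γ : Γ => γ • x) '' Sx x = AComp (F : Set Γ) U x) :
    ∀ x ∈ U, ∃ W : Set X, IsOpen W ∧ x ∈ W ∧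
      ∀ s ∈ Sx x, ∀ f ∈ F, f * s ∉ Sx x →
        ∃ δ : ℝ, 0 < δ ∧ ∀ z ∈ W, ∀ u ∈ U, δ ≤ dist ((f * s) • z) u := by
  intro x hx
  -- AComp ⊆ U
  have hACompU : AComp (F : Set Γ) U x ⊆ U := by
    intro y hy
    induction hy with
    | refl => exact hx
    | tail _ h _ => exact h.2.1
  -- injectivity of γ ↦ γ • x
  have hinj : Set.InjOn (fun γ : Γ => γ • x) (Sx x) := by
    intro a _ b _ hab
    simp only at hab
    have h1 : (b⁻¹ * a) • x = x := by rw [mul_smul, hab, inv_smul_smul]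
    have h2 := hfree _ _ h1
    have : b * (b⁻¹ * a) = b * 1 := by rw [h2]
    simpa [mul_assoc] using this
  -- Sx x is finite
  have hSxfin : (Sx x).Finite := by
    obtain ⟨z, hz⟩ := hbdd x hx
    have himfin : ((fun γ : Γ => γ • x) '' Sx x).Finite := by
      rw [hSx x hx]
      exact (S.finite_toSet.image _).subset hz
    exact Set.Finite.of_finite_image himfin hinj
  -- the bad set
  set B : Set Γ := {g | g ∉ Sx x ∧ ∃ s ∈ Sx x, ∃ f ∈ (F : Set Γ), g = f * s} with hB
  have hBfin : B.Finite := by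
    apply (Set.Finite.image2 (fun f s => f * s) F.finite_toSet hSxfin).subset
    rintro g ⟨-, s, hs, f, hf, rfl⟩
    exact Set.mem_image2_of_mem hf hs
  -- g • x ∉ U for g ∈ B
  have hnotU : ∀ g ∈ B, g • x ∉ U := by
    rintro g ⟨hgS, s, hs, f, hf, rfl⟩ hmem
    apply hgS
    have hsx : s • x ∈ AComp (F : Set Γ) U x := by
      rw [← hSx x hx]; exact ⟨s, hs, rfl⟩
    have hstep : (f * s) • x ∈ AComp (F : Set Γ) U x := by
      refine Relation.ReflTransGen.tail hsx ⟨hACompU hsx, hmem, f, hf, ?_⟩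
      rw [mul_smul]
    rw [← hSx x hx] at hstep
    obtain ⟨γ, hγ, hγx⟩ := hstep
    have : γ = f * s := by
      have h1 : ((f * s)⁻¹ * γ) • x = x := by simp only at hγx; rw [mul_smul, hγx, inv_smul_smul]
      have h2 := hfree _ _ h1
      have : (f * s) * ((f * s)⁻¹ * γ) = (f * s) * 1 := by rw [h2]
      simpa [mul_assoc] using this
    exact this ▸ hγ
  -- positive distances
  have hpos : ∀ g ∈ B, 0 < Metric.infDist (g • x) U := fun g hg =>
    (hU.notMem_iff_infDist_pos ⟨x, hx⟩).mp (hnotU g hg)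
  -- build W
  set W : Set X := ⋂ g ∈ B, (fun z : X => g • z) ⁻¹'
      Metric.ball (g • x) (Metric.infDist (g • x) U / 2) with hW
  refine ⟨W, ?_, ?_, ?_⟩
  · exact hBfin.isOpen_biInter fun g _ => (Metric.isOpen_ball).preimage (hcont g)
  · refine Set.mem_iInter₂.mpr fun g hg => ?_
    simp only [Set.mem_preimage, Metric.mem_ball, dist_self]
    exact half_pos (hpos g hg)
  · intro s hs f hf hfs
    have hgB : f * s ∈ B := ⟨hfs, s, hs, f, hf, rfl⟩
    set g := f * s
    refine ⟨Metric.infDist (g • x) U / 2, half_pos (hpos g hgB), ?_⟩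
    intro z hz u hu
    have hz' : dist (g • z) (g • x) < Metric.infDist (g • x) U / 2 := by
      have := Set.mem_iInter₂.mp hz g hgB
      simpa using this
    have h1 : Metric.infDist (g • x) U ≤ dist (g • x) u := Metric.infDist_le_dist_of_mem hu
    have h2 : dist (g • x) u ≤ dist (g • x) (g • z) + dist (g • z) u := dist_triangle _ _ _
    rw [dist_comm (g • x) (g • z)] at h2
    linarith
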